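/- Let K be a finite extension of ℚ_p with uniformizer π and n > 1 a natural number. For each k > ord(n), setting k' = k + ord(n), the map x ↦ x^n is a bijection from K^{(k)} onto P_n^{(k')}, where for a set X ⊆ K, X^{(k)} = {x ∈ X | x ≠ 0 and ord(π^{−ord(x)} x − 1) ≥ k} and P_n = {x ∈ K^× | ∃ y ∈ K, y^n = x}. -/

import Mathlib

open scoped BigOperators ENNReal NNReal

structure PadicLike (p : ℕ) [Fact p.Prime] (K : Type*) [Field K] [Algebra ℚ_[p] K] where
  ord : K → ℤ
  pi : K
  q : ℕ
  pi_ne_zero : pi ≠ 0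
  ord_pi : ord pi = 1
  one_lt_q : 1 < q
  ord_mul : ∀ x y : K, x ≠ 0 → y ≠ 0 → ord (x * y) = ord x + ord y
  ord_min_le_add : ∀ x y : K, x ≠ 0 → y ≠ 0 → x + y ≠ 0 → min (ord x) (ord y) ≤ ord (x + y)
  ord_compat : ∃ e : ℕ, 0 < e ∧ ∀ x : ℚ_[p], x ≠ 0 →
    ord (algebraMap ℚ_[p] K x) = (e : ℤ) * x.valuation

namespace PadicLike
variable {p : ℕ} [Fact p.Prime] {K : Type*} [Field K] [Algebra ℚ_[p] K]

/-- The valuation ring `R = {x ∈ K | ord x ≥ 0}`. -/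
def R (v : PadicLike p K) : Set K := {x | x = 0 ∨ 0 ≤ v.ord x}

/-- `X^{(k)} = {x ∈ X | x ≠ 0 and ord(π^{-ord x} x - 1) ≥ k}` (where `ord 0 = ∞` is
interpreted via the disjunct `π^{-ord x} x = 1`). -/
def lvl (v : PadicLike p K) (X : Set K) (k : ℤ) : Set K :=
  {x | x ∈ X ∧ x ≠ 0 ∧ (v.pi ^ (-v.ord x) * x = 1 ∨ k ≤ v.ord (v.pi ^ (-v.ord x) * x - 1))}

/-- `P_n`, the set of nonzero `n`-th powers in `K`. -/
def Pset (n : ℕ) : Set K := {x : K | x ≠ 0 ∧ ∃ y : K, y ^ n = x}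

end PadicLike

namespace PadicLike
variable {p : ℕ} [Fact p.Prime] {K : Type*} [Field K] [Algebra ℚ_[p] K] (v : PadicLike p K)

theorem charZeroK (_v : PadicLike p K) : CharZero K :=
  charZero_of_injective_algebraMap (algebraMap ℚ_[p] K).injective

theorem ord_one : v.ord 1 = 0 := by
  have := v.ord_mul 1 1 one_ne_zero one_ne_zero
  simpa using this.symm

theorem ord_inv {x : K} (hx : x ≠ 0) : v.ord x⁻¹ = -v.ord x := by
  have := v.ord_mul x x⁻¹ hx (inv_ne_zero hx)
  rw [mul_inv_cancel₀ hx, v.ord_one] at this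
  omega

theorem ord_neg_one : v.ord (-1 : K) = 0 := by
  have := v.ord_mul (-1) (-1) (by norm_num) (by norm_num)
  simp only [neg_mul, one_mul, neg_neg, v.ord_one] at this
  omega

theorem ord_neg {x : K} (hx : x ≠ 0) : v.ord (-x) = v.ord x := by
  have := v.ord_mul (-1) x (by norm_num) hx
  rw [neg_one_mul, v.ord_neg_one] at this
  omega

theorem ord_pow {x : K} (hx : x ≠ 0) (m : ℕ) : v.ord (x ^ m) = m * v.ord x := by
  induction m with
  | zero => simpa using v.ord_one
  | succ m ih =>
      rw [pow_succ, v.ord_mul _ _ (pow_ne_zero _ hx) hx, ih]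
      push_cast; ring

theorem ord_zpow {x : K} (hx : x ≠ 0) (m : ℤ) : v.ord (x ^ m) = m * v.ord x := by
  cases m with
  | ofNat m => simpa using v.ord_pow hx m
  | negSucc m =>
      rw [zpow_negSucc, v.ord_inv (pow_ne_zero _ hx), v.ord_pow hx]
      simp [Int.negSucc_eq]; ring

theorem ord_pi_zpow (m : ℤ) : v.ord (v.pi ^ m) = m := by
  rw [v.ord_zpow v.pi_ne_zero, v.ord_pi, mul_one]

/-- `ord x ≥ c`, with `x = 0` counting as `∞`. -/
def Ge (c : ℤ) (x : K) : Prop := x = 0 ∨ c ≤ v.ord x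

theorem Ge.mono {c d : ℤ} {x : K} (h : v.Ge c x) (hdc : d ≤ c) : v.Ge d x := by
  rcases h with h | h
  · exact Or.inl h
  · exact Or.inr (le_trans hdc h)

theorem ge_zero (c : ℤ) : v.Ge c 0 := Or.inl rfl

theorem Ge.add {c : ℤ} {x y : K} (hx : v.Ge c x) (hy : v.Ge c y) : v.Ge c (x + y) := by
  rcases hx with rfl | hx
  · rw [zero_add]; exact hy
  rcases hy with rfl | hy
  · rw [add_zero]; exact Or.inr hx
  by_cases hx0 : x = 0
  · rw [hx0, zero_add]; exact Or.inr hy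
  by_cases hy0 : y = 0
  · rw [hy0, add_zero]; exact Or.inr hx
  by_cases hxy : x + y = 0
  · exact Or.inl hxy
  · exact Or.inr (le_trans (le_min hx hy) (v.ord_min_le_add x y hx0 hy0 hxy))

theorem Ge.neg {c : ℤ} {x : K} (hx : v.Ge c x) : v.Ge c (-x) := by
  rcases hx with rfl | hx
  · rw [neg_zero]; exact v.ge_zero c
  by_cases hx0 : x = 0
  · rw [hx0, neg_zero]; exact v.ge_zero c
  · exact Or.inr (by rwa [v.ord_neg hx0])

theorem Ge.sub {c : ℤ} {x y : K} (hx : v.Ge c x) (hy : v.Ge c y) : v.Ge c (x - y) := by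
  rw [sub_eq_add_neg]; exact Ge.add v hx (Ge.neg v hy)

theorem Ge.mul {c d : ℤ} {x y : K} (hx : v.Ge c x) (hy : v.Ge d y) : v.Ge (c + d) (x * y) := by
  rcases hx with rfl | hx
  · rw [zero_mul]; exact v.ge_zero _
  rcases hy with rfl | hy
  · rw [mul_zero]; exact v.ge_zero _
  by_cases hx0 : x = 0
  · rw [hx0, zero_mul]; exact v.ge_zero _
  by_cases hy0 : y = 0
  · rw [hy0, mul_zero]; exact v.ge_zero _
  · exact Or.inr (by rw [v.ord_mul x y hx0 hy0]; omega)

theorem ge_sum {c : ℤ} {s : Finset ℕ} {f : ℕ → K} (h : ∀ i ∈ s, v.Ge c (f i)) :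
    v.Ge c (∑ i ∈ s, f i) := by
  classical
  induction s using Finset.induction_on with
  | empty => simpa using v.ge_zero c
  | @insert a s' ha ih =>
      rw [Finset.sum_insert ha]
      exact Ge.add v (h a (Finset.mem_insert_self a s'))
        (ih fun i hi => h i (Finset.mem_insert_of_mem hi))

/-- If `ord x < c` and `ord y ≥ c` then `x + y ≠ 0` and `ord (x+y) = ord x`. -/
theorem ord_add_eq {c : ℤ} {x y : K} (hx0 : x ≠ 0) (hxc : v.ord x < c) (hy : v.Ge c y) :
    x + y ≠ 0 ∧ v.ord (x + y) = v.ord x := by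
  rcases hy with rfl | hy
  · simpa using hx0
  by_cases hy0 : y = 0
  · simpa [hy0] using hx0
  have hlt : v.ord x < v.ord y := lt_of_lt_of_le hxc hy
  have hxy : x + y ≠ 0 := by
    intro h
    have hyx : y = -x := eq_neg_of_add_eq_zero_right h
    rw [hyx, v.ord_neg hx0] at hlt
    exact lt_irrefl _ hlt
  refine ⟨hxy, ?_⟩
  have h1 := v.ord_min_le_add x y hx0 hy0 hxy
  have hneg : (-y) ≠ 0 := neg_ne_zero.mpr hy0
  have h2 := v.ord_min_le_add (x + y) (-y) hxy hneg (by simpa using hx0)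
  rw [add_neg_cancel_right, v.ord_neg hy0] at h2
  omega

theorem Ge.pow {c : ℤ} {x : K} (hx : v.Ge c x) (m : ℕ) : v.Ge (m * c) (x ^ m) := by
  induction m with
  | zero => exact Or.inr (by simpa using v.ord_one.ge)
  | succ m ih =>
      have h := Ge.mul v ih hx
      have he : ((m + 1 : ℕ) : ℤ) * c = (m : ℤ) * c + c := by push_cast; ring
      rw [pow_succ, he]; exact h

theorem ord_nat (m : ℕ) : v.Ge 0 ((m : K)) := by
  rcases Nat.eq_zero_or_pos m with rfl | hm
  · simpa using v.ge_zero 0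
  have hm0 : ((m : ℚ_[p])) ≠ 0 := Nat.cast_ne_zero.mpr hm.ne'
  obtain ⟨e, he, hc⟩ := v.ord_compat
  have h1 : ((m : K)) = algebraMap ℚ_[p] K ((m : ℚ_[p])) := (map_natCast _ m).symm
  refine Or.inr ?_
  rw [h1, hc _ hm0, Padic.valuation_natCast]
  positivity

theorem one_add_pow_sub (v : PadicLike p K) (t : K) (n : ℕ) :
    (1 + t) ^ n - 1
      = ∑ j ∈ Finset.range n, t ^ (j+1) * 1 ^ (n - (j+1)) * (n.choose (j+1) : K) := by
  rw [add_comm 1 t, add_pow, Finset.sum_range_succ']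
  simp

theorem pow_near_one {n : ℕ} (hn : 1 ≤ n) (hnK : (n : K) ≠ 0) {k : ℤ}
    (hord : v.ord (n : K) < k) {t : K} (ht : v.Ge k t) :
    v.Ge (k + v.ord (n : K)) ((1 + t) ^ n - 1) := by
  have hn0 : 0 ≤ v.ord (n : K) := (v.ord_nat n).resolve_left hnK
  have hk1 : 0 < k := lt_of_le_of_lt hn0 hord
  rw [v.one_add_pow_sub]
  apply v.ge_sum
  intro j hj
  rw [Finset.mem_range] at hj
  have h1 : v.Ge 0 ((1:K) ^ (n - (j+1))) := Or.inr (by simpa using v.ord_one.ge)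
  rcases Nat.eq_zero_or_pos j with rfl | hjpos
  · have hC : v.Ge (v.ord (n : K)) ((n.choose 1 : K)) := by
      rw [Nat.choose_one_right]; exact Or.inr le_rfl
    have := Ge.mul v (Ge.mul v (Ge.pow v ht 1) h1) hC
    refine Ge.mono v this ?_
    simp
  · have hC : v.Ge 0 ((n.choose (j+1) : K)) := v.ord_nat _
    have := Ge.mul v (Ge.mul v (Ge.pow v ht (j+1)) h1) hC
    refine Ge.mono v this ?_
    have h2 : (2:ℤ) ≤ ((j+1 : ℕ) : ℤ) := by exact_mod_cast Nat.succ_le_succ hjpos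
    have h2k : 2 * k ≤ ((j+1 : ℕ) : ℤ) * k := mul_le_mul_of_nonneg_right h2 hk1.le
    omega

theorem eq_zero_of_pow_eq_one {n : ℕ} (hn : 1 ≤ n) (hnK : (n : K) ≠ 0) {k : ℤ}
    (hord : v.ord (n : K) < k) {s : K} (hs : v.Ge k s) (h : (1 + s) ^ n = 1) : s = 0 := by
  by_contra hs0
  have hsk : k ≤ v.ord s := hs.resolve_left hs0
  have hn0 : 0 ≤ v.ord (n : K) := (v.ord_nat n).resolve_left hnK
  have hk1 : 0 < k := lt_of_le_of_lt hn0 hord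
  obtain ⟨m, rfl⟩ : ∃ m, n = m + 1 := ⟨n - 1, by omega⟩
  have hid := v.one_add_pow_sub s (m+1)
  rw [Finset.sum_range_succ', h, sub_self] at hid
  simp only [pow_zero, zero_add, Nat.choose_one_right, one_pow, mul_one, pow_one] at hid
  -- hid : 0 = ∑ j in range m, s^(j+1+1) * (choose (m+1) (j+1+1) : K) + s * ((m+1 : ℕ) : K)
  have hx0 : s * (((m+1 : ℕ)) : K) ≠ 0 := mul_ne_zero hs0 hnK
  have hxc : v.ord (s * (((m+1 : ℕ)) : K)) < v.ord s + k := by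
    rw [v.ord_mul _ _ hs0 hnK]; omega
  have hr : v.Ge (v.ord s + k)
      (∑ j ∈ Finset.range m, s ^ (j+1+1) * ((m+1).choose (j+1+1) : K)) := by
    apply v.ge_sum
    intro j hj
    have hC : v.Ge 0 (((m+1).choose (j+1+1) : K)) := v.ord_nat _
    have hss : v.Ge (v.ord s) s := Or.inr le_rfl
    have := Ge.mul v (Ge.pow v hss (j+1+1)) hC
    refine Ge.mono v this ?_
    have h2 : (2:ℤ) ≤ ((j+1+1 : ℕ) : ℤ) := by exact_mod_cast Nat.succ_le_succ (Nat.succ_le_succ (Nat.zero_le j))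
    have h2k : 2 * v.ord s ≤ ((j+1+1 : ℕ) : ℤ) * v.ord s :=
      mul_le_mul_of_nonneg_right h2 (by omega)
    omega
  exact (v.ord_add_eq hx0 hxc hr).1 (by rw [add_comm] at hid; exact hid.symm)

section Pabs

theorem one_lt_pR : 1 < (p : ℝ) := by exact_mod_cast (Fact.out : p.Prime).one_lt

theorem pR_pos : (0:ℝ) < (p : ℝ) := lt_trans one_pos (one_lt_pR (p := p))

open Classical in
/-- The underlying function of the absolute value attached to `ord`. -/
noncomputable def pabsFun (v : PadicLike p K) (e : ℕ) : K → ℝ :=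
  fun x => if x = 0 then 0 else (p : ℝ) ^ (-(v.ord x : ℝ) / (e : ℝ))

theorem pabsFun_zero (v : PadicLike p K) (e : ℕ) : pabsFun v e 0 = 0 := by
  rw [pabsFun, if_pos rfl]

theorem pabsFun_ne (v : PadicLike p K) (e : ℕ) (x : K) (hx : x ≠ 0) :
    pabsFun v e x = (p : ℝ) ^ (-(v.ord x : ℝ) / (e : ℝ)) := by
  rw [pabsFun, if_neg hx]

theorem pabsFun_nonneg (v : PadicLike p K) (e : ℕ) (x : K) : 0 ≤ pabsFun v e x := by
  rw [pabsFun]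
  split
  · exact le_rfl
  · positivity

theorem pabsFun_mono (v : PadicLike p K) (e : ℕ) {a b : ℤ} (h : a ≤ b) :
    (p : ℝ) ^ (-(b : ℝ) / (e : ℝ)) ≤ (p : ℝ) ^ (-(a : ℝ) / (e : ℝ)) := by
  apply Real.rpow_le_rpow_of_exponent_le (one_lt_pR (p := p)).le
  have he0 : (0:ℝ) ≤ (e : ℝ) := by positivity
  rcases eq_or_lt_of_le he0 with he | he
  · rw [← he, div_zero, div_zero]
  · rw [div_le_div_iff₀ he he]
    have : (a : ℝ) ≤ (b : ℝ) := by exact_mod_cast h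
    nlinarith

theorem pabsFun_le {e : ℕ} (v : PadicLike p K) {c : ℤ} {x : K} (h : v.Ge c x) :
    pabsFun v e x ≤ (p : ℝ) ^ (-(c : ℝ) / (e : ℝ)) := by
  rcases h with rfl | h
  · rw [pabsFun_zero]; positivity
  by_cases hx : x = 0
  · rw [hx, pabsFun_zero]; positivity
  · rw [pabsFun_ne v e x hx]
    exact pabsFun_mono v e h

theorem ge_of_pabsFun_le {e : ℕ} (v : PadicLike p K) {c : ℤ} {x : K} (he : 0 < e)
    (h : pabsFun v e x ≤ (p : ℝ) ^ (-(c : ℝ) / (e : ℝ))) : v.Ge c x := by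
  by_cases hx : x = 0
  · exact Or.inl hx
  refine Or.inr ?_
  rw [pabsFun_ne v e x hx] at h
  have h2 := (Real.rpow_le_rpow_left_iff (one_lt_pR (p := p))).mp h
  have heR : (0:ℝ) < (e : ℝ) := by exact_mod_cast he
  have h3 : (c : ℝ) ≤ (v.ord x : ℝ) := by
    rw [div_le_div_iff₀ heR heR] at h2
    nlinarith
  exact_mod_cast h3

theorem pabsFun_mul (v : PadicLike p K) (e : ℕ) (x y : K) :
    pabsFun v e (x * y) = pabsFun v e x * pabsFun v e y := by
  by_cases hx : x = 0
  · subst hx; simp [pabsFun_zero]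
  by_cases hy : y = 0
  · subst hy; simp [pabsFun_zero]
  rw [pabsFun_ne v e _ (mul_ne_zero hx hy), pabsFun_ne v e x hx, pabsFun_ne v e y hy,
    v.ord_mul x y hx hy, ← Real.rpow_add (pR_pos (p := p))]
  congr 1
  push_cast
  ring

/-- The absolute value on `K` attached to `ord`. -/
noncomputable def pabs (v : PadicLike p K) (e : ℕ) : AbsoluteValue K ℝ where
  toFun := pabsFun v e
  map_mul' x y := pabsFun_mul v e x y
  nonneg' x := pabsFun_nonneg v e x
  eq_zero' x := by
    show pabsFun v e x = 0 ↔ x = 0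
    constructor
    · intro h
      by_contra hx
      rw [pabsFun_ne v e x hx] at h
      have hpos : (0:ℝ) < (p:ℝ) ^ (-(v.ord x : ℝ)/(e:ℝ)) :=
        Real.rpow_pos_of_pos (pR_pos (p := p)) _
      exact absurd h hpos.ne'
    · intro h; rw [h, pabsFun_zero]
  add_le' x y := by
    show pabsFun v e (x + y) ≤ pabsFun v e x + pabsFun v e y
    by_cases hx : x = 0
    · rw [hx, zero_add, pabsFun_zero, zero_add]
    by_cases hy : y = 0
    · rw [hy, add_zero, pabsFun_zero, add_zero]
    by_cases hxy : x + y = 0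
    · rw [hxy, pabsFun_zero]
      have := pabsFun_nonneg v e x
      have := pabsFun_nonneg v e y
      linarith
    have hmin := v.ord_min_le_add x y hx hy hxy
    rw [pabsFun_ne v e _ hxy]
    rcases le_total (v.ord x) (v.ord y) with hle | hle
    · calc (p:ℝ) ^ (-(v.ord (x+y) : ℝ)/(e:ℝ)) ≤ (p:ℝ) ^ (-(v.ord x : ℝ)/(e:ℝ)) := by
            apply pabsFun_mono v e; rw [min_eq_left hle] at hmin; exact hmin
        _ ≤ _ := by
            rw [pabsFun_ne v e x hx]
            exact le_add_of_nonneg_right (pabsFun_nonneg v e y)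
    · calc (p:ℝ) ^ (-(v.ord (x+y) : ℝ)/(e:ℝ)) ≤ (p:ℝ) ^ (-(v.ord y : ℝ)/(e:ℝ)) := by
            apply pabsFun_mono v e; rw [min_eq_right hle] at hmin; exact hmin
        _ ≤ _ := by
            rw [pabsFun_ne v e y hy]
            exact le_add_of_nonneg_left (pabsFun_nonneg v e x)

end Pabs

theorem ord_div (v : PadicLike p K) {x y : K} (hx : x ≠ 0) (hy : y ≠ 0) :
    v.ord (x / y) = v.ord x - v.ord y := by
  rw [div_eq_mul_inv, v.ord_mul x _ hx (inv_ne_zero hy), v.ord_inv hy]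
  ring

theorem unit_of_near_one (v : PadicLike p K) {k : ℤ} (hk : 0 < k) {x : K}
    (h : v.Ge k (x - 1)) : x ≠ 0 ∧ v.ord x = 0 := by
  by_cases hx1 : x - 1 = 0
  · have hx : x = 1 := by rwa [sub_eq_zero] at hx1
    exact ⟨by rw [hx]; exact one_ne_zero, by rw [hx, v.ord_one]⟩
  have h' : k ≤ v.ord (x - 1) := h.resolve_left hx1
  have h2 := v.ord_add_eq (x := 1) (y := x - 1) one_ne_zero
    (by rw [v.ord_one]; exact hk) (Or.inr h')
  have he : (1:K) + (x - 1) = x := by ring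
  rw [he, v.ord_one] at h2
  exact h2

/-- Newton iteration for `X^n - w` starting at `1`. -/
noncomputable def newton {K : Type*} [Field K] (n : ℕ) (w : K) : ℕ → K
  | 0 => 1
  | m + 1 => newton n w m - (newton n w m ^ n - w) / ((n : K) * newton n w m ^ (n - 1))

theorem newton_invariant (v : PadicLike p K) {n : ℕ} (hn : 1 ≤ n) (hnK : (n : K) ≠ 0)
    {k : ℤ} (hord : v.ord (n : K) < k) {w : K} (hw : v.Ge (k + v.ord (n : K)) (w - 1)) :
    ∀ m : ℕ, v.Ge k (newton n w m - 1) ∧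
      v.Ge (k + v.ord (n : K) + (m : ℤ)) (newton n w m ^ n - w) := by
  have hn0 : 0 ≤ v.ord (n : K) := (v.ord_nat n).resolve_left hnK
  have hk0 : 0 < k := lt_of_le_of_lt hn0 hord
  intro m
  induction m with
  | zero =>
      constructor
      · simp only [newton, sub_self]
        exact v.ge_zero k
      · simp only [newton, one_pow, Nat.cast_zero, add_zero]
        have h1 := Ge.neg v hw
        rw [neg_sub] at h1
        exact h1
  | succ m ih =>
      obtain ⟨ih1, ih2⟩ := ih
      obtain ⟨hx0, hxord⟩ := v.unit_of_near_one hk0 ih1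
      have hxp : newton n w m ^ (n-1) ≠ 0 := pow_ne_zero _ hx0
      have hd'0 : (n : K) * newton n w m ^ (n-1) ≠ 0 := mul_ne_zero hnK hxp
      by_cases hfx : newton n w m ^ n - w = 0
      · have hstep : newton n w (m+1) = newton n w m := by
          rw [newton, hfx, zero_div, sub_zero]
        rw [hstep]
        refine ⟨ih1, ?_⟩
        rw [hfx]
        exact v.ge_zero _
      have hstep : newton n w (m+1)
          = newton n w m + -((newton n w m ^ n - w) / ((n : K) * newton n w m ^ (n-1))) := by
        rw [newton]; ring
      have hh0 : -((newton n w m ^ n - w) / ((n : K) * newton n w m ^ (n-1))) ≠ 0 :=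
        neg_ne_zero.mpr (div_ne_zero hfx hd'0)
      have hordh : v.ord (-((newton n w m ^ n - w) / ((n : K) * newton n w m ^ (n-1))))
          = v.ord (newton n w m ^ n - w) - v.ord (n : K) := by
        rw [v.ord_neg (div_ne_zero hfx hd'0), v.ord_div hfx hd'0,
          v.ord_mul _ _ hnK hxp, v.ord_pow hx0, hxord]
        ring
      have hfxord : k + v.ord (n : K) + (m : ℤ) ≤ v.ord (newton n w m ^ n - w) :=
        ih2.resolve_left hfx
      have hordh' : k + (m : ℤ) ≤ v.ord (-((newton n w m ^ n - w) / ((n : K) * newton n w m ^ (n-1)))) := by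
        omega
      constructor
      · rw [hstep]
        have he : newton n w m + -((newton n w m ^ n - w) / ((n : K) * newton n w m ^ (n-1))) - 1
            = (newton n w m - 1) + -((newton n w m ^ n - w) / ((n : K) * newton n w m ^ (n-1))) := by
          ring
        rw [he]
        exact Ge.add v ih1 (Or.inr (by omega))
      · rw [hstep]
        obtain ⟨m', rfl⟩ : ∃ m', n = m' + 1 := ⟨n - 1, by omega⟩
        simp only [Nat.add_sub_cancel] at *
        generalize hxg : newton (m'+1) w m = x at *
        generalize hhg : -((x ^ (m'+1) - w) / (((m'+1 : ℕ) : K) * x ^ m')) = h at *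
        have hid : (x + h) ^ (m'+1) - w
            = ∑ i ∈ Finset.range m',
                h ^ (i+1+1) * x ^ (m'+1 - (i+1+1)) * (((m'+1).choose (i+1+1) : ℕ) : K) := by
          rw [add_comm x h, add_pow, Finset.sum_range_succ', Finset.sum_range_succ']
          simp only [zero_add, pow_zero, pow_one, one_mul, mul_one, Nat.choose_zero_right,
            Nat.choose_one_right, Nat.cast_one, Nat.sub_zero, Nat.add_sub_cancel]
          have hkey : h * x ^ m' * (((m'+1 : ℕ)) : K) = -(x ^ (m'+1) - w) := by
            rw [← hhg]
            rw [neg_mul, neg_mul, neg_inj, div_mul_eq_mul_div, div_mul_eq_mul_div,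
              div_eq_iff hd'0]
            ring
          rw [hkey]
          ring
        rw [hid]
        apply v.ge_sum
        intro i hi
        have t1 : v.Ge (((i+1+1 : ℕ) : ℤ) * (k + (m : ℤ))) (h ^ (i+1+1)) :=
          Ge.pow v (Or.inr hordh') _
        have t2 : v.Ge 0 (x ^ (m'+1-(i+1+1))) :=
          Or.inr (by rw [v.ord_pow hx0, hxord, mul_zero])
        have t3 : v.Ge 0 ((((m'+1).choose (i+1+1) : ℕ) : K)) := v.ord_nat _
        have hmul := Ge.mul v (Ge.mul v t1 t2) t3
        refine Ge.mono v hmul ?_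
        have h2 : (2:ℤ) ≤ ((i+1+1 : ℕ) : ℤ) := by push_cast; omega
        have h3 : 2 * (k + (m : ℤ)) ≤ ((i+1+1 : ℕ) : ℤ) * (k + (m : ℤ)) :=
          mul_le_mul_of_nonneg_right h2 (by omega)
        omega

theorem hensel_pow (v : PadicLike p K) [FiniteDimensional ℚ_[p] K]
    {n : ℕ} (hn : 1 ≤ n) (hnK : (n : K) ≠ 0) {k : ℤ} (hord : v.ord (n : K) < k)
    {w : K} (hw : v.Ge (k + v.ord (n : K)) (w - 1)) :
    ∃ u : K, u ^ n = w ∧ v.Ge k (u - 1) := by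
  have hn0 : 0 ≤ v.ord (n : K) := (v.ord_nat n).resolve_left hnK
  have hk0 : 0 < k := lt_of_le_of_lt hn0 hord
  obtain ⟨e, he, hcomp⟩ := v.ord_compat
  have heR : (0:ℝ) < (e : ℝ) := by exact_mod_cast he
  letI : NormedField K := (pabs v e).toNormedField
  have hnorm : ∀ y : K, ‖y‖ = pabsFun v e y := fun y => rfl
  letI : NormedSpace ℚ_[p] K :=
    { norm_smul_le := fun c x => by
        rw [Algebra.smul_def]
        by_cases hc : c = 0
        · simp [hc, hnorm, pabsFun_zero]
        have hac : algebraMap ℚ_[p] K c ≠ 0 := by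
          intro h0
          exact hc ((algebraMap ℚ_[p] K).injective (by rw [h0, map_zero]))
        rw [hnorm, hnorm, pabsFun_mul v e]
        apply mul_le_mul_of_nonneg_right _ (pabsFun_nonneg v e x)
        rw [pabsFun_ne v e _ hac, hcomp c hc, Padic.norm_eq_zpow_neg_valuation hc]
        rw [show -((((e:ℤ) * c.valuation : ℤ)) : ℝ) / (e : ℝ) = (((-c.valuation : ℤ)) : ℝ) by
          push_cast
          field_simp]
        rw [Real.rpow_intCast] }
  haveI : CompleteSpace K := FiniteDimensional.complete ℚ_[p] K
  have inv := v.newton_invariant hn hnK hord hw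
  set seq : ℕ → K := newton n w with hseq
  set r : ℝ := (p:ℝ) ^ (-(1:ℝ)/(e:ℝ)) with hrdef
  have hr1 : r < 1 :=
    Real.rpow_lt_one_of_one_lt_of_neg (one_lt_pR (p := p))
      (div_neg_of_neg_of_pos (by norm_num) heR)
  have hr0 : 0 < r := Real.rpow_pos_of_pos (pR_pos (p := p)) _
  have hCr : ∀ (c : ℤ) (m : ℕ), (p:ℝ) ^ (-(((c + (m:ℤ)) : ℤ) : ℝ) / (e:ℝ))
      = (p:ℝ) ^ (-(c:ℝ)/(e:ℝ)) * r ^ m := by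
    intro c m
    rw [hrdef, ← Real.rpow_natCast ((p:ℝ) ^ (-(1:ℝ)/(e:ℝ))) m,
      ← Real.rpow_mul (pR_pos (p := p)).le, ← Real.rpow_add (pR_pos (p := p))]
    congr 1
    push_cast
    ring
  have hdiff : ∀ m : ℕ, v.Ge (k + (m:ℤ)) (seq m - seq (m+1)) := by
    intro m
    have hsub : seq m - seq (m+1) = (seq m ^ n - w) / ((n:K) * seq m ^ (n-1)) := by
      rw [hseq]
      show newton n w m - newton n w (m+1) = _
      rw [newton]
      ring
    rw [hsub]
    by_cases hfx : seq m ^ n - w = 0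
    · rw [hfx, zero_div]
      exact v.ge_zero _
    obtain ⟨hs0, hsord⟩ := v.unit_of_near_one hk0 (inv m).1
    have hxp : seq m ^ (n-1) ≠ 0 := pow_ne_zero _ hs0
    have hd'0 : (n:K) * seq m ^ (n-1) ≠ 0 := mul_ne_zero hnK hxp
    refine Or.inr ?_
    rw [v.ord_div hfx hd'0, v.ord_mul _ _ hnK hxp, v.ord_pow hs0, hsord, mul_zero, add_zero]
    have := (inv m).2.resolve_left hfx
    omega
  have hdist : ∀ m, dist (seq m) (seq (m+1)) ≤ (p:ℝ) ^ (-(k:ℝ)/(e:ℝ)) * r ^ m := by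
    intro m
    rw [dist_eq_norm, hnorm, ← hCr k m]
    exact pabsFun_le v (hdiff m)
  have hcauchy : CauchySeq seq := cauchySeq_of_le_geometric r _ hr1 hdist
  obtain ⟨u, hu⟩ := cauchySeq_tendsto_of_complete hcauchy
  have hpow : Filter.Tendsto (fun m => seq m ^ n - w) Filter.atTop (nhds (u ^ n - w)) :=
    (hu.pow n).sub_const w
  have hzero : Filter.Tendsto (fun m => seq m ^ n - w) Filter.atTop (nhds 0) := by
    apply squeeze_zero_norm
      (a := fun m => (p:ℝ) ^ (-(((k + v.ord (n:K)) : ℤ) : ℝ) / (e:ℝ)) * r ^ m)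
    · intro m
      rw [hnorm, ← hCr (k + v.ord (n:K)) m]
      exact pabsFun_le v (inv m).2
    · have := (tendsto_pow_atTop_nhds_zero_of_lt_one hr0.le hr1).const_mul
        ((p:ℝ) ^ (-(((k + v.ord (n:K)) : ℤ) : ℝ) / (e:ℝ)))
      simpa using this
  have hroot : u ^ n - w = 0 := tendsto_nhds_unique hpow hzero
  refine ⟨u, by rwa [sub_eq_zero] at hroot, ?_⟩
  have hmem : ∀ m, seq m ∈ Metric.closedBall (1:K) ((p:ℝ) ^ (-(k:ℝ)/(e:ℝ))) := by
    intro m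
    rw [Metric.mem_closedBall, dist_eq_norm, hnorm]
    exact pabsFun_le v (inv m).1
  have humem : u ∈ Metric.closedBall (1:K) ((p:ℝ) ^ (-(k:ℝ)/(e:ℝ))) :=
    Metric.isClosed_closedBall.mem_of_tendsto hu (Filter.Eventually.of_forall hmem)
  rw [Metric.mem_closedBall, dist_eq_norm, hnorm] at humem
  exact ge_of_pabsFun_le v he humem


theorem ord_unit_part (v : PadicLike p K) {x : K} (hx : x ≠ 0) :
    v.pi ^ (-v.ord x) * x ≠ 0 ∧ v.ord (v.pi ^ (-v.ord x) * x) = 0 := by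
  have hz : v.pi ^ (-v.ord x) ≠ 0 := zpow_ne_zero _ v.pi_ne_zero
  refine ⟨mul_ne_zero hz hx, ?_⟩
  rw [v.ord_mul _ _ hz hx, v.ord_pi_zpow]
  ring

theorem mem_lvl_iff (v : PadicLike p K) {X : Set K} {k : ℤ} {x : K} :
    x ∈ v.lvl X k ↔ x ∈ X ∧ x ≠ 0 ∧ v.Ge k (v.pi ^ (-v.ord x) * x - 1) := by
  constructor
  · rintro ⟨h1, h2, h3 | h3⟩
    · exact ⟨h1, h2, Or.inl (by rw [h3, sub_self])⟩
    · exact ⟨h1, h2, Or.inr h3⟩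
  · rintro ⟨h1, h2, h3 | h3⟩
    · exact ⟨h1, h2, Or.inl (by rwa [sub_eq_zero] at h3)⟩
    · exact ⟨h1, h2, Or.inr h3⟩

theorem zpow_pow {K : Type*} [Field K] (a : K) (c : ℤ) (n : ℕ) :
    (a ^ c) ^ n = a ^ ((n : ℤ) * c) := by
  rw [← zpow_natCast (a ^ c) n, ← zpow_mul, mul_comm]

end PadicLike

/-- For `n > 1` and `k > ord n`, with `k' = k + ord n`, `x ↦ x^n` is a bijection
from `K^{(k)}` onto `P_n^{(k')}`. -/
theorem pow_bijOn {p : ℕ} [Fact p.Prime] {K : Type*} [Field K] [Algebra ℚ_[p] K]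
    [FiniteDimensional ℚ_[p] K] (v : PadicLike p K)
    (n : ℕ) (hn : 1 < n) (k : ℤ) (hk : v.ord (n : K) < k) :
    Set.BijOn (fun x : K => x ^ n) (v.lvl Set.univ k)
      (v.lvl (PadicLike.Pset n) (k + v.ord (n : K))) := by
  haveI : CharZero K := v.charZeroK
  have hn1 : 1 ≤ n := hn.le
  have hnK : (n : K) ≠ 0 := Nat.cast_ne_zero.mpr (by omega)
  have hn0 : 0 ≤ v.ord (n : K) := (v.ord_nat n).resolve_left hnK
  have hk0 : 0 < k := lt_of_le_of_lt hn0 hk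
  refine ⟨?_, ?_, ?_⟩
  · -- MapsTo
    intro x hx
    rw [v.mem_lvl_iff] at hx
    obtain ⟨-, hx0, hx1⟩ := hx
    show x ^ n ∈ _
    rw [v.mem_lvl_iff]
    refine ⟨⟨pow_ne_zero n hx0, x, rfl⟩, pow_ne_zero n hx0, ?_⟩
    have hu : v.pi ^ (-v.ord (x ^ n)) * x ^ n = (v.pi ^ (-v.ord x) * x) ^ n := by
      rw [v.ord_pow hx0 n, mul_pow, PadicLike.zpow_pow]
      ring_nf
    rw [hu]
    have h1 : (1 : K) + (v.pi ^ (-v.ord x) * x - 1) = v.pi ^ (-v.ord x) * x := by ring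
    have := v.pow_near_one hn1 hnK hk hx1
    rwa [h1] at this
  · -- InjOn
    intro x hx y hy hxy
    rw [v.mem_lvl_iff] at hx hy
    obtain ⟨-, hx0, hx1⟩ := hx
    obtain ⟨-, hy0, hy1⟩ := hy
    simp only at hxy
    have hordeq : v.ord x = v.ord y := by
      have h := congrArg v.ord hxy
      rw [v.ord_pow hx0, v.ord_pow hy0] at h
      have hnz : (n : ℤ) ≠ 0 := by exact_mod_cast (by omega : n ≠ 0)
      exact mul_left_cancel₀ hnz h
    obtain ⟨hu0, huord⟩ := v.ord_unit_part hx0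
    obtain ⟨ht0, htord⟩ := v.ord_unit_part hy0
    have hupow : (v.pi ^ (-v.ord x) * x) ^ n = (v.pi ^ (-v.ord y) * y) ^ n := by
      rw [mul_pow, mul_pow, hordeq, hxy]
    have hs : v.Ge k ((v.pi ^ (-v.ord x) * x) / (v.pi ^ (-v.ord y) * y) - 1) := by
      have h1 : (v.pi ^ (-v.ord x) * x) / (v.pi ^ (-v.ord y) * y) - 1
          = ((v.pi ^ (-v.ord x) * x) - (v.pi ^ (-v.ord y) * y)) / (v.pi ^ (-v.ord y) * y) := by
        rw [sub_div, div_self ht0]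
      rw [h1]
      by_cases hd : (v.pi ^ (-v.ord x) * x) - (v.pi ^ (-v.ord y) * y) = 0
      · rw [hd, zero_div]
        exact v.ge_zero k
      have hsub : v.Ge k ((v.pi ^ (-v.ord x) * x) - (v.pi ^ (-v.ord y) * y)) := by
        have e1 : (v.pi ^ (-v.ord x) * x) - (v.pi ^ (-v.ord y) * y)
            = (v.pi ^ (-v.ord x) * x - 1) - (v.pi ^ (-v.ord y) * y - 1) := by ring
        rw [e1]
        exact PadicLike.Ge.sub v hx1 hy1
      refine Or.inr ?_
      rw [v.ord_div hd ht0, htord]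
      have := hsub.resolve_left hd
      omega
    have hpow1 : (1 + ((v.pi ^ (-v.ord x) * x) / (v.pi ^ (-v.ord y) * y) - 1)) ^ n = 1 := by
      have h1 : (1 : K) + ((v.pi ^ (-v.ord x) * x) / (v.pi ^ (-v.ord y) * y) - 1)
          = (v.pi ^ (-v.ord x) * x) / (v.pi ^ (-v.ord y) * y) := by ring
      rw [h1, div_pow, hupow, div_self (pow_ne_zero _ ht0)]
    have hz := v.eq_zero_of_pow_eq_one hn1 hnK hk hs hpow1
    have hut : v.pi ^ (-v.ord x) * x = v.pi ^ (-v.ord y) * y := by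
      have h2 := sub_eq_zero.mp hz
      exact (div_eq_one_iff_eq ht0).mp h2
    rw [← hordeq] at hut
    exact mul_left_cancel₀ (zpow_ne_zero _ v.pi_ne_zero) hut
  · -- SurjOn
    intro z hz
    rw [v.mem_lvl_iff] at hz
    obtain ⟨⟨-, y, hy⟩, hz0, hz1⟩ := hz
    have hy0 : y ≠ 0 := by
      rintro rfl
      rw [zero_pow (by omega : n ≠ 0)] at hy
      exact hz0 hy.symm
    have hordz : v.ord z = (n : ℤ) * v.ord y := by rw [← hy, v.ord_pow hy0]
    obtain ⟨u, hun, hu1⟩ := v.hensel_pow hn1 hnK hk hz1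
    obtain ⟨hu0, huord⟩ := v.unit_of_near_one hk0 hu1
    refine ⟨v.pi ^ (v.ord y) * u, ?_, ?_⟩
    · rw [v.mem_lvl_iff]
      have hpz : v.pi ^ (v.ord y) ≠ 0 := zpow_ne_zero _ v.pi_ne_zero
      have hx0 : v.pi ^ (v.ord y) * u ≠ 0 := mul_ne_zero hpz hu0
      have hordx : v.ord (v.pi ^ (v.ord y) * u) = v.ord y := by
        rw [v.ord_mul _ _ hpz hu0, v.ord_pi_zpow, huord, add_zero]
      refine ⟨trivial, hx0, ?_⟩
      rw [hordx]
      have h3 : v.pi ^ (-v.ord y) * (v.pi ^ (v.ord y) * u) = u := by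
        rw [← mul_assoc, ← zpow_add₀ v.pi_ne_zero]
        simp
      rw [h3]
      exact hu1
    · show (v.pi ^ (v.ord y) * u) ^ n = z
      rw [mul_pow, hun, PadicLike.zpow_pow, ← hordz, ← mul_assoc,
        ← zpow_add₀ v.pi_ne_zero]
      simp
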